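/- With the above notation, let m = (m_1,…,m_r) be a dominant tuple of integers and let 1 ≤ k ≤ r be such that m − e_k is dominant (i.e., m_k ≥ 1 and, if k < r, m_k > m_{k+1}). Then B(m,k) ≠ 0. -/
import Mathlib


open Finset

/-- A tuple of integers is dominant if its entries are weakly decreasing and nonnegative. -/
def Dominant {r : ℕ} (m : Fin r → ℤ) : Prop :=
  (∀ j k : Fin r, j ≤ k → m k ≤ m j) ∧ ∀ j : Fin r, 0 ≤ m j

instance {r : ℕ} (m : Fin r → ℤ) : Decidable (Dominant m) := by
  unfold Dominant; infer_instance

/-- The genus `p = (e+1) + (r-1)d + b/2`. -/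
noncomputable def genusP (r : ℕ) (b d e : ℝ) : ℝ := (e + 1) + ((r : ℝ) - 1) * d + b / 2

/-- `n = r(p + b/2)`. -/
noncomputable def dimN (r : ℕ) (b d e : ℝ) : ℝ := r * (genusP r b d e + b / 2)

/-- `ρ_k = (r-k)d/2 + e/2 + b/4` (1-indexed `k`). -/
noncomputable def rho (r : ℕ) (b d e : ℝ) (k : Fin r) : ℝ :=
  ((r : ℝ) - ((k : ℕ) + 1)) * d / 2 + e / 2 + b / 4

/-- The coefficient `A(m,k)`. -/
noncomputable def Acoef (r : ℕ) (b d e : ℝ) (m : Fin r → ℤ) (k : Fin r) : ℝ :=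
  (genusP r b d e / (2 * dimN r b d e)) *
    ((2 * ((m k : ℝ) + rho r b d e k) + b / 2 + 1) *
        (2 * ((m k : ℝ) + rho r b d e k) + b / 2 + e)) /
      ((2 * ((m k : ℝ) + rho r b d e k)) * (2 * ((m k : ℝ) + rho r b d e k) + 1)) *
    ∏ j ∈ univ.erase k,
      ((((m k : ℝ) + rho r b d e k) - ((m j : ℝ) + rho r b d e j) + d / 2) *
          (((m k : ℝ) + rho r b d e k) + ((m j : ℝ) + rho r b d e j) + d / 2)) /
        ((((m k : ℝ) + rho r b d e k) - ((m j : ℝ) + rho r b d e j)) *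
          (((m k : ℝ) + rho r b d e k) + ((m j : ℝ) + rho r b d e j)))

/-- The coefficient `B(m,k)`. -/
noncomputable def Bcoef (r : ℕ) (b d e : ℝ) (m : Fin r → ℤ) (k : Fin r) : ℝ :=
  (genusP r b d e / (2 * dimN r b d e)) *
    ((2 * ((m k : ℝ) + rho r b d e k) - b / 2 - 1) *
        (2 * ((m k : ℝ) + rho r b d e k) - b / 2 - e)) /
      ((2 * ((m k : ℝ) + rho r b d e k)) * (2 * ((m k : ℝ) + rho r b d e k) - 1)) *
    ∏ j ∈ univ.erase k,
      ((((m k : ℝ) + rho r b d e k) + ((m j : ℝ) + rho r b d e j) - d / 2) *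
          (((m k : ℝ) + rho r b d e k) - ((m j : ℝ) + rho r b d e j) - d / 2)) /
        ((((m k : ℝ) + rho r b d e k) + ((m j : ℝ) + rho r b d e j)) *
          (((m k : ℝ) + rho r b d e k) - ((m j : ℝ) + rho r b d e j)))

/-- The coefficient `C(m)`. -/
noncomputable def Ccoef (r : ℕ) (b d e : ℝ) (m : Fin r → ℤ) : ℝ :=
  1 - (∑ k ∈ univ.filter (fun k : Fin r =>
        Dominant (fun j => m j + if j = k then 1 else 0)), Acoef r b d e m k)
    - (∑ k ∈ univ.filter (fun k : Fin r =>
        Dominant (fun j => m j - if j = k then 1 else 0)), Bcoef r b d e m k)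

theorem Bcoef_ne_zero_of_dominant_sub (r : ℕ) (hr : 1 ≤ r) (b d e : ℝ)
    (hb : 1 ≤ b) (he : 0 ≤ e) (hd : 1 < r → 1 ≤ d)
    (m : Fin r → ℤ) (hm : Dominant m) (k : Fin r)
    (hk : Dominant (fun j => m j - if j = k then 1 else 0)) :
    Bcoef r b d e m k ≠ 0 := by
  have hmk1 : 1 ≤ m k := by
    have := hk.2 k
    simp at this
    omega
  have hm0 : ∀ j : Fin r, 0 ≤ m j := hm.2
  -- coefficient nonnegativity for rho terms
  have hcd : ∀ j : Fin r, 0 ≤ ((r : ℝ) - ((j : ℕ) + 1)) * d := by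
    intro j
    rcases eq_or_lt_of_le (Nat.succ_le_of_lt j.isLt) with h | h
    · rw [show ((r : ℝ) - ((j : ℕ) + 1)) = 0 by push_cast [← h]; ring]
      simp
    · have hd1 : 1 ≤ d := hd (by omega)
      apply mul_nonneg _ (by linarith)
      have : ((j : ℕ) : ℝ) + 1 ≤ (r : ℝ) := by exact_mod_cast h.le
      linarith
  have hrho : ∀ j : Fin r, b / 4 ≤ rho r b d e j := by
    intro j
    have := hcd j
    unfold rho
    linarith
  have hmkr : (1 : ℝ) ≤ (m k : ℝ) := by exact_mod_cast hmk1
  have hxk : 1 + b / 4 ≤ (m k : ℝ) + rho r b d e k := by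
    have := hrho k; linarith
  have hP : 0 < genusP r b d e := by
    unfold genusP
    have : 0 ≤ ((r : ℝ) - 1) * d := by
      have := hcd ⟨0, by omega⟩
      simpa using this
    linarith
  have hN : 0 < dimN r b d e := by
    unfold dimN
    have hr' : (0 : ℝ) < r := by exact_mod_cast hr
    have : 0 < genusP r b d e + b / 2 := by linarith
    positivity
  apply mul_ne_zero
  · apply div_ne_zero
    · apply mul_ne_zero
      · exact div_ne_zero hP.ne' (by positivity)
      · -- numerator: (2x - b/2 - 1)(2x - b/2 - e)
        have h1 : 0 < 2 * ((m k : ℝ) + rho r b d e k) - b / 2 - 1 := by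
          have := hrho k; have := hcd k
          unfold rho at *
          linarith
        have h2 : 0 < 2 * ((m k : ℝ) + rho r b d e k) - b / 2 - e := by
          have := hcd k
          unfold rho at *
          linarith
        exact mul_ne_zero h1.ne' h2.ne'
    · have h1 : 0 < 2 * ((m k : ℝ) + rho r b d e k) := by linarith
      have h2 : 0 < 2 * ((m k : ℝ) + rho r b d e k) - 1 := by linarith
      exact mul_ne_zero h1.ne' h2.ne'
  · rw [Finset.prod_ne_zero_iff]
    intro j hj
    have hjk : j ≠ k := Finset.ne_of_mem_erase hj
    have hr2 : 1 < r := by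
      by_contra h
      have : j = k := by
        have := j.isLt; have := k.isLt
        exact Fin.ext (by omega)
      exact hjk this
    have hd1 : 1 ≤ d := hd hr2
    have hmj : (0 : ℝ) ≤ (m j : ℝ) := by exact_mod_cast hm0 j
    have hxj : b / 4 ≤ (m j : ℝ) + rho r b d e j := by
      have := hrho j; linarith
    -- rho difference
    have hrhodiff : rho r b d e k - rho r b d e j = (((j : ℕ) : ℝ) - ((k : ℕ) : ℝ)) * d / 2 := by
      unfold rho; ring
    have hsum : 0 < ((m k : ℝ) + rho r b d e k) + ((m j : ℝ) + rho r b d e j) := by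
      linarith
    have hsumd : 0 < ((m k : ℝ) + rho r b d e k) + ((m j : ℝ) + rho r b d e j) - d / 2 := by
      -- rho k + rho j - d/2 ≥ 0 since k+j ≤ 2r-3
      have hk' : (k : ℕ) < r := k.isLt
      have hj' : (j : ℕ) < r := j.isLt
      have hne : (j : ℕ) ≠ (k : ℕ) := fun h => hjk (Fin.ext h)
      have hkj : (k : ℕ) + (j : ℕ) + 3 ≤ 2 * r := by omega
      have hkjR : ((k : ℕ) : ℝ) + ((j : ℕ) : ℝ) + 3 ≤ 2 * (r : ℝ) := by exact_mod_cast hkj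
      have hco : 0 ≤ (2 * (r : ℝ) - ((k : ℕ) : ℝ) - ((j : ℕ) : ℝ) - 3) * d :=
        mul_nonneg (by linarith) (by linarith)
      unfold rho
      nlinarith
    have hdiff : ((m k : ℝ) + rho r b d e k) - ((m j : ℝ) + rho r b d e j) ≠ 0 ∧
        ((m k : ℝ) + rho r b d e k) - ((m j : ℝ) + rho r b d e j) - d / 2 ≠ 0 := by
      rcases lt_or_gt_of_ne (fun h => hjk (Fin.ext h) : (j : ℕ) ≠ (k : ℕ)) with h | h
      · -- j < k : m j ≥ m k, rho k < rho j, diff < 0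
        have hmjk : m k ≤ m j := hm.1 j k (by exact Fin.le_def.mpr h.le)
        have hmjkR : (m k : ℝ) ≤ (m j : ℝ) := by exact_mod_cast hmjk
        have hjkR : ((j : ℕ) : ℝ) + 1 ≤ ((k : ℕ) : ℝ) := by exact_mod_cast h
        have : ((m k : ℝ) + rho r b d e k) - ((m j : ℝ) + rho r b d e j) ≤ -d / 2 := by
          have : rho r b d e k - rho r b d e j ≤ -d / 2 := by
            rw [hrhodiff]; nlinarith
          linarith
        constructor <;> [linarith; linarith]
      · -- j > k : m k - 1 ≥ m j, rho k > rho j, diff > d/2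
        have hmjk : m j ≤ m k - 1 := by
          have h2 := hk.1 k j (Fin.le_def.mpr h.le)
          simp [hjk] at h2
          omega
        have hmjkR : (m j : ℝ) ≤ (m k : ℝ) - 1 := by exact_mod_cast hmjk
        have hjkR : ((k : ℕ) : ℝ) + 1 ≤ ((j : ℕ) : ℝ) := by exact_mod_cast h
        have hgap : d / 2 ≤ rho r b d e k - rho r b d e j := by
          rw [hrhodiff]; nlinarith
        have hbig : d / 2 + 1 ≤ ((m k : ℝ) + rho r b d e k) - ((m j : ℝ) + rho r b d e j) := by
          linarith
        constructor
        · intro h0; rw [h0] at hbig; linarith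
        · intro h0; nlinarith
    exact div_ne_zero (mul_ne_zero hsumd.ne' hdiff.2) (mul_ne_zero hsum.ne' hdiff.1)
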